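/- Let B be the incidence matrix of an SBIBD(v,k,λ) and set S = x·B + y·(J - B). If λx² + 2(k-λ)xy + (v-2k+λ)y² = 0, then S·Sᵀ = ω·I where ω = kx² + (v-k)y², and |det(S)| = ω^(v/2). -/
import Mathlib

open Matrix

/-- The all-ones matrix J. -/
def allOnes (n : ℕ) : Matrix (Fin n) (Fin n) ℝ := Matrix.of fun _ _ => 1

theorem stmt_3 (v k l : ℕ) (x y : ℝ)
    (B : Matrix (Fin v) (Fin v) ℝ)
    (h01 : ∀ i j, B i j = 0 ∨ B i j = 1)
    (hBBt : B * Bᵀ = ((k:ℝ) - l) • (1 : Matrix (Fin v) (Fin v) ℝ) + (l:ℝ) • allOnes v)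
    (hrow : ∀ i, ∑ j, B i j = (k : ℝ))
    (hfisher : (l:ℝ) * ((v:ℝ) - 1) = (k:ℝ) * ((k:ℝ) - 1))
    (hchar : (l:ℝ) * x ^ 2 + 2 * ((k:ℝ) - l) * x * y + ((v:ℝ) - 2 * k + l) * y ^ 2 = 0)
    (S : Matrix (Fin v) (Fin v) ℝ)
    (hS : S = x • B + y • (allOnes v - B)) :
    S * Sᵀ = ((k:ℝ) * x ^ 2 + ((v:ℝ) - k) * y ^ 2) • (1 : Matrix (Fin v) (Fin v) ℝ) ∧
      |S.det| = ((k:ℝ) * x ^ 2 + ((v:ℝ) - k) * y ^ 2) ^ ((v:ℝ)/2) := by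
  set ω : ℝ := (k:ℝ) * x ^ 2 + ((v:ℝ) - k) * y ^ 2 with hω
  have hBB : ∀ i j, ∑ m, B i m * B j m =
      ((k:ℝ) - l) * (if i = j then 1 else 0) + l := by
    intro i j
    have h := congrFun (congrFun hBBt i) j
    simpa [mul_apply, transpose_apply, one_apply, allOnes, Matrix.add_apply,
      Matrix.smul_apply, smul_eq_mul] using h
  have h1 : S * Sᵀ = ω • (1 : Matrix (Fin v) (Fin v) ℝ) := by
    ext i j
    have hsum : ∀ m, S i m * S j m =
        (x - y) ^ 2 * (B i m * B j m) + (x - y) * y * B i m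
          + (x - y) * y * B j m + y ^ 2 := by
      intro m
      simp only [hS, Matrix.add_apply, Matrix.smul_apply, Matrix.sub_apply,
        allOnes, Matrix.of_apply, smul_eq_mul]
      ring
    have : (S * Sᵀ) i j = ∑ m, S i m * S j m := by
      simp [mul_apply, transpose_apply]
    rw [this]
    simp only [hsum]
    rw [Finset.sum_add_distrib, Finset.sum_add_distrib, Finset.sum_add_distrib,
      ← Finset.mul_sum, ← Finset.mul_sum, ← Finset.mul_sum, hBB, hrow, hrow,
      Finset.sum_const, Finset.card_univ, Fintype.card_fin, nsmul_eq_mul]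
    simp only [Matrix.smul_apply, one_apply, smul_eq_mul]
    by_cases hij : i = j <;> simp [hij, hω] <;> nlinarith [hchar]
  refine ⟨h1, ?_⟩
  rcases Nat.eq_zero_or_pos v with hv | hv
  · subst hv
    have : S.det = 1 := by
      simp [Matrix.det_fin_zero]
    rw [this]
    norm_num
  · have hωnn : 0 ≤ ω := by
      obtain ⟨i⟩ : Nonempty (Fin v) := ⟨⟨0, hv⟩⟩
      have h := congrFun (congrFun h1 i) i
      have h2 : (∑ m, S i m * S i m) = ω := by
        simpa [mul_apply, transpose_apply, one_apply] using h
      rw [← h2]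
      exact Finset.sum_nonneg fun m _ => mul_self_nonneg _
    have hdet : S.det ^ 2 = ω ^ v := by
      have := congrArg Matrix.det h1
      rwa [Matrix.det_mul, Matrix.det_transpose, Matrix.det_smul, Matrix.det_one,
        Fintype.card_fin, mul_one, ← sq] at this
    have habs : |S.det| = Real.sqrt (ω ^ v) := by
      rw [← hdet, Real.sqrt_sq_eq_abs]
    rw [habs, Real.sqrt_eq_rpow, ← Real.rpow_natCast ω v, ← Real.rpow_mul hωnn]
    ring_nf
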